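/- For all integers n, m, i with 0 ≤ i ≤ m ≤ n, the following binomial identity holds: ∑_{r=i}^{n+m} (-1)^r (m+n+1-r) · C(n+2, r+1-i) · C(m+n-r, n-r+i) = (-1)^i (n+m+2-i) · C(m+n+1-i, n+1), where C(a,b) denotes the binomial coefficient with the convention C(a,b) = 0 whenever b < 0 or b > a. -/

import Mathlib

open Finset

/-- The binomial coefficient `C(a,b)` for integers, with the convention that
`C(a,b) = 0` whenever `b < 0` or `b > a`. -/
def intChoose (a b : ℤ) : ℤ :=
  if 0 ≤ b ∧ b ≤ a then (a.toNat.choose b.toNat : ℤ) else 0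

lemma intChoose_coe (a b : ℕ) : intChoose (a:ℤ) (b:ℤ) = ((a.choose b : ℕ) : ℤ) := by
  unfold intChoose
  split
  · simp
  · next h =>
    rw [Nat.choose_eq_zero_of_lt (by omega)]
    simp

lemma intChoose_neg {a b : ℤ} (hb : b < 0) : intChoose a b = 0 := by
  unfold intChoose
  rw [if_neg (by omega)]

lemma key_alt (p : ℕ) : ∀ a b : ℕ,
    ∑ u ∈ range (p+1), (-1:ℤ)^u * (p.choose u) * ((a+u).choose (b+u))
      = (-1:ℤ)^p * (a.choose (b+p)) := by
  induction p with
  | zero => intro a b; simp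
  | succ p ih =>
    intro a b
    rw [Finset.sum_range_succ']
    have hsplit : ∀ u ∈ range (p+1),
        (-1:ℤ)^(u+1) * ((p+1).choose (u+1)) * ((a+(u+1)).choose (b+(u+1)))
        = -((-1:ℤ)^u * (p.choose u) * (((a+1)+u).choose ((b+1)+u)))
          + (-1:ℤ)^(u+1) * (p.choose (u+1)) * ((a+(u+1)).choose (b+(u+1))) := by
      intro u _
      rw [Nat.choose_succ_succ p u,
        show (a+1)+u = a+(u+1) by omega, show (b+1)+u = b+(u+1) by omega]
      push_cast
      ring
    rw [Finset.sum_congr rfl hsplit, Finset.sum_add_distrib]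
    have h1 : ∑ u ∈ range (p+1), -((-1:ℤ)^u * (p.choose u) * (((a+1)+u).choose ((b+1)+u)))
        = -((-1:ℤ)^p * ((a+1).choose ((b+1)+p))) := by
      rw [Finset.sum_neg_distrib, ih (a+1) (b+1)]
    have h2 : (∑ u ∈ range (p+1), (-1:ℤ)^(u+1) * (p.choose (u+1)) * ((a+(u+1)).choose (b+(u+1))))
        + (-1:ℤ)^0 * ((p+1).choose 0) * ((a+0).choose (b+0))
        = (-1:ℤ)^p * (a.choose (b+p)) := by
      have h0 : ((-1:ℤ)^0 * ((p+1).choose 0) * ((a+0).choose (b+0)))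
          = (-1:ℤ)^0 * ((p).choose 0) * ((a+0).choose (b+0)) := by simp
      rw [h0, ← Finset.sum_range_succ' (fun u => (-1:ℤ)^u * (p.choose u) * ((a+u).choose (b+u))) (p+1),
        Finset.sum_range_succ, ih a b, Nat.choose_succ_self]
      simp
    rw [add_assoc, h2, h1]
    have : ((a+1).choose ((b+1)+p)) = a.choose (b+p) + a.choose (b+(p+1)) := by
      rw [show (b+1)+p = (b+p)+1 by omega, Nat.choose_succ_succ, show b+(p+1) = (b+p)+1 by omega]
    rw [this]
    push_cast
    ring

lemma term_eq (M n s : ℕ) (hs : s ≤ n) (hn : n ≤ M) :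
    ((M-s)+1) * ((n+2).choose (s+1)) * ((M-s).choose (n-s))
      = (n+2) * ((n+1).choose (s+1)) * (((M-s)+1).choose ((n-s)+1)) := by
  have ha : ((M-s)+1) * ((M-s).choose (n-s)) = ((M-s)+1).choose ((n-s)+1) * ((n-s)+1) :=
    Nat.add_one_mul_choose_eq (M-s) (n-s)
  have hb : (n+1).choose (s+1) * (n+2) = (n+2).choose (s+1) * ((n-s)+1) := by
    have h := Nat.choose_mul_succ_eq (n+1) (s+1)
    rwa [show n+1+1 = n+2 by rfl, show n+1+1-(s+1) = (n-s)+1 by omega] at h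
  calc ((M-s)+1) * ((n+2).choose (s+1)) * ((M-s).choose (n-s))
      = (((M-s)+1) * ((M-s).choose (n-s))) * ((n+2).choose (s+1)) := by ring
    _ = (((M-s)+1).choose ((n-s)+1) * ((n-s)+1)) * ((n+2).choose (s+1)) := by rw [ha]
    _ = ((n+2).choose (s+1) * ((n-s)+1)) * (((M-s)+1).choose ((n-s)+1)) := by ring
    _ = ((n+1).choose (s+1) * (n+2)) * (((M-s)+1).choose ((n-s)+1)) := by rw [hb]
    _ = (n+2) * ((n+1).choose (s+1)) * (((M-s)+1).choose ((n-s)+1)) := by ring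

/-- **The master binomial identity.** For all integers `0 ≤ i ≤ m ≤ n`:
`∑_{r=i}^{n+m} (-1)^r (m+n+1-r)·C(n+2, r+1-i)·C(m+n-r, n-r+i)
  = (-1)^i (n+m+2-i)·C(m+n+1-i, n+1)`. -/
theorem master_binomial_identity (n m i : ℕ) (hi : i ≤ m) (hmn : m ≤ n) :
    ∑ r ∈ Finset.Icc i (n + m),
      (-1 : ℤ) ^ r * ((m : ℤ) + n + 1 - r) * intChoose ((n : ℤ) + 2) ((r : ℤ) + 1 - i) *
        intChoose ((m : ℤ) + n - r) ((n : ℤ) - r + i)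
      = (-1 : ℤ) ^ i * ((n : ℤ) + m + 2 - i) * intChoose ((m : ℤ) + n + 1 - i) ((n : ℤ) + 1) := by

  set M := m + n - i with hMdef
  have hnM : n ≤ M := by omega
  set A := M - n with hAdef
  have hA : A = m - i := by omega
  -- Step 1: Icc → range
  have hIcc : Finset.Icc i (n+m) = Finset.Ico i (n+m+1) := by
    rw [Finset.Ico_add_one_right_eq_Icc]
  rw [hIcc, Finset.sum_Ico_eq_sum_range]
  -- Step 2: shrink to range (n+1)
  rw [show n+m+1-i = (n+1) + (m-i) by omega]
  rw [Finset.sum_range_add]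
  have hvan : ∀ s ∈ range (m-i),
      (-1 : ℤ) ^ (i+((n+1)+s)) * ((m : ℤ) + n + 1 - (i+((n+1)+s) : ℕ)) *
        intChoose ((n : ℤ) + 2) (((i+((n+1)+s) : ℕ) : ℤ) + 1 - i) *
        intChoose ((m : ℤ) + n - (i+((n+1)+s) : ℕ)) ((n : ℤ) - (i+((n+1)+s) : ℕ) + i) = 0 := by
    intro s _
    rw [intChoose_neg (show (n : ℤ) - ((i+((n+1)+s) : ℕ) : ℤ) + i < 0 by push_cast; omega)]
    ring
  rw [Finset.sum_congr rfl hvan, Finset.sum_const_zero, add_zero]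
  -- Step 3: rewrite each term in range (n+1)
  have hterm : ∀ s ∈ range (n+1),
      (-1 : ℤ) ^ (i+s) * ((m : ℤ) + n + 1 - (i+s : ℕ)) *
        intChoose ((n : ℤ) + 2) (((i+s : ℕ) : ℤ) + 1 - i) *
        intChoose ((m : ℤ) + n - (i+s : ℕ)) ((n : ℤ) - (i+s : ℕ) + i)
      = (-1:ℤ)^i * ((-1:ℤ)^s *
          ((((M-s)+1) * ((n+2).choose (s+1)) * ((M-s).choose (n-s)) : ℕ) : ℤ)) := by
    intro s hs
    rw [Finset.mem_range] at hs
    have hs' : s ≤ n := by omega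
    have e1 : ((n:ℤ)+2) = ((n+2 : ℕ) : ℤ) := by push_cast; ring
    have e2 : (((i+s : ℕ) : ℤ) + 1 - i) = ((s+1 : ℕ) : ℤ) := by push_cast; ring
    have e3 : ((m:ℤ) + n - (i+s : ℕ)) = ((M - s : ℕ) : ℤ) := by push_cast; omega
    have e4 : ((n:ℤ) - (i+s : ℕ) + i) = ((n - s : ℕ) : ℤ) := by push_cast; omega
    have e5 : ((m:ℤ) + n + 1 - (i+s : ℕ)) = (((M-s)+1 : ℕ) : ℤ) := by push_cast; omega
    rw [e1, e2, e3, e4, e5, intChoose_coe, intChoose_coe, pow_add]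
    push_cast
    ring
  rw [Finset.sum_congr rfl hterm, ← Finset.mul_sum]
  -- Step 4: apply term_eq and pull out (n+2)
  have hterm2 : ∀ s ∈ range (n+1),
      ((-1:ℤ)^s * ((((M-s)+1) * ((n+2).choose (s+1)) * ((M-s).choose (n-s)) : ℕ) : ℤ))
      = ((n:ℤ)+2) * ((-1:ℤ)^s * ((n+1).choose (s+1)) * ((((M-s)+1).choose ((n-s)+1) : ℕ) : ℤ)) := by
    intro s hs
    rw [Finset.mem_range] at hs
    rw [term_eq M n s (by omega) hnM]
    push_cast
    ring
  rw [Finset.sum_congr rfl hterm2, ← Finset.mul_sum]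
  -- Step 5: reflect the sum
  have hrefl := Finset.sum_range_reflect
    (fun s => (-1:ℤ)^s * ((n+1).choose (s+1)) * ((((M-s)+1).choose ((n-s)+1) : ℕ) : ℤ)) (n+1)
  simp only [Nat.add_sub_cancel] at hrefl
  rw [← hrefl]
  -- Step 6: rewrite reflected terms to key_alt form
  have hneg1 : ∀ u : ℕ, u ≤ n → (-1:ℤ)^(n-u) = (-1:ℤ)^n * (-1:ℤ)^u := by
    intro u hu
    have h2 : ((-1:ℤ)^u) * ((-1:ℤ)^u) = 1 := by
      rw [← pow_add, ← two_mul, pow_mul]; norm_num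
    calc (-1:ℤ)^(n-u) = (-1:ℤ)^(n-u) * (((-1:ℤ)^u) * ((-1:ℤ)^u)) := by rw [h2, mul_one]
      _ = ((-1:ℤ)^(n-u) * (-1:ℤ)^u) * (-1:ℤ)^u := by ring
      _ = (-1:ℤ)^n * (-1:ℤ)^u := by rw [← pow_add, show n-u+u = n by omega]
  have hterm3 : ∀ u ∈ range (n+1),
      (-1:ℤ)^(n-u) * ((n+1).choose ((n-u)+1)) * ((((M-(n-u))+1).choose ((n-(n-u))+1) : ℕ) : ℤ)
      = (-1:ℤ)^n * ((-1:ℤ)^u * ((n+1).choose u) * ((((A+1)+u).choose (1+u) : ℕ) : ℤ)) := by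
    intro u hu
    rw [Finset.mem_range] at hu
    have hu' : u ≤ n := by omega
    have c1 : (n+1).choose ((n-u)+1) = (n+1).choose u := by
      have := Nat.choose_symm (show (n-u)+1 ≤ n+1 by omega) (n := n+1)
      rw [show (n+1)-((n-u)+1) = u by omega] at this
      exact this.symm
    have c2 : (M-(n-u))+1 = (A+1)+u := by omega
    have c3 : (n-(n-u))+1 = 1+u := by omega
    rw [c1, c2, c3, hneg1 u hu']
    ring
  rw [Finset.sum_congr rfl hterm3, ← Finset.mul_sum]
  -- Step 7: evaluate the inner sum via key_alt
  have hkey := key_alt (n+1) (A+1) 1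
  rw [Finset.sum_range_succ, Nat.choose_self] at hkey
  have hzero : (A+1).choose (1+(n+1)) = 0 :=
    Nat.choose_eq_zero_of_lt (by omega)
  rw [hzero] at hkey
  have hsum : ∑ u ∈ range (n+1), (-1:ℤ)^u * ((n+1).choose u) * ((((A+1)+u).choose (1+u) : ℕ) : ℤ)
      = (-1:ℤ)^n * ((M+2).choose (n+2) : ℕ) := by
    have h2 : ((A+1)+(n+1)).choose (1+(n+1)) = (M+2).choose (n+2) := by
      rw [show (A+1)+(n+1) = M+2 by omega, show 1+(n+1) = n+2 by omega]
    have : ∑ u ∈ range (n+1), (-1:ℤ)^u * ((n+1).choose u) * ((((A+1)+u).choose (1+u) : ℕ) : ℤ)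
        = -((-1:ℤ)^(n+1) * (((A+1)+(n+1)).choose (1+(n+1)) : ℕ)) := by
      have := hkey
      push_cast at this ⊢
      linarith [this]
    rw [this, h2, pow_succ]
    push_cast
    ring
  rw [hsum]
  -- Step 8: finish
  have hRHSc1 : ((m:ℤ) + n + 1 - i) = ((M+1 : ℕ) : ℤ) := by push_cast; omega
  have hRHSc2 : ((n:ℤ) + 1) = ((n+1 : ℕ) : ℤ) := by push_cast; ring
  rw [hRHSc1, hRHSc2, intChoose_coe]
  have habs : (M+2) * ((M+1).choose (n+1)) = (M+2).choose (n+2) * (n+2) := by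
    have h := Nat.add_one_mul_choose_eq (M+1) (n+1)
    rwa [show M+1+1 = M+2 by omega, show n+1+1 = n+2 by omega] at h
  have hfinal : ((n:ℤ) + m + 2 - i) = ((M+2 : ℕ) : ℤ) := by push_cast; omega
  rw [hfinal]
  have h2 : ((-1:ℤ)^n) * ((-1:ℤ)^n) = 1 := by
    rw [← pow_add, ← two_mul, pow_mul]; norm_num
  have hz : ((n:ℤ)+2) * (((M+2).choose (n+2) : ℕ) : ℤ)
      = ((M+2 : ℕ) : ℤ) * (((M+1).choose (n+1) : ℕ) : ℤ) := by
    have hz' := congrArg (Nat.cast : ℕ → ℤ) habs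
    push_cast at hz' ⊢
    linarith
  calc (-1:ℤ)^i * (((n:ℤ)+2) * ((-1:ℤ)^n * ((-1:ℤ)^n * (((M+2).choose (n+2) : ℕ) : ℤ))))
      = ((-1:ℤ)^n * (-1:ℤ)^n) * ((-1:ℤ)^i * (((n:ℤ)+2) * (((M+2).choose (n+2) : ℕ) : ℤ))) := by ring
    _ = (-1:ℤ)^i * (((n:ℤ)+2) * (((M+2).choose (n+2) : ℕ) : ℤ)) := by rw [h2, one_mul]
    _ = (-1:ℤ)^i * (((M+2 : ℕ) : ℤ) * (((M+1).choose (n+1) : ℕ) : ℤ)) := by rw [hz]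
    _ = (-1:ℤ)^i * ((M+2 : ℕ) : ℤ) * (((M+1).choose (n+1) : ℕ) : ℤ) := by ring
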